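/- Let G be a graph with a leaf x (vertex of degree 1) whose unique neighbor is v. Then for every k ≥ 1, the number of non-forcing k-subsets satisfies z'(G;k) ≥ z'(G−x;k) + z'(G−{x,v};k−1). -/

import Mathlib

open SimpleGraph

/-- The zero forcing closure: `ZFClosure G S v` means vertex `v` eventually becomes blue
when starting from the blue set `S` and repeatedly applying the color-change rule:
a blue vertex with exactly one white neighbor forces that neighbor to become blue. -/
inductive ZFClosure {V : Type*} (G : SimpleGraph V) (S : Set V) : V → Prop
  | init {v : V} : v ∈ S → ZFClosure G S v
  | force {u w : V} : ZFClosure G S u → G.Adj u w →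
      (∀ x, G.Adj u x → x ≠ w → ZFClosure G S x) → ZFClosure G S w

/-- `S` is a zero forcing set of `G` if its closure is all of `V`. -/
def IsZeroForcing {V : Type*} (G : SimpleGraph V) (S : Set V) : Prop :=
  ∀ v, ZFClosure G S v

/-- `z(G;k)`: the number of zero forcing sets of size `k`. -/
noncomputable def zfCount {V : Type*} (G : SimpleGraph V) [Fintype V] (k : ℕ) : ℕ :=
  Nat.card {S : Finset V // S.card = k ∧ IsZeroForcing G ↑S}

/-- `z'(G;k)`: the number of non-forcing `k`-subsets. -/
noncomputable def nfCount {V : Type*} (G : SimpleGraph V) [Fintype V] (k : ℕ) : ℕ :=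
  Nat.card {S : Finset V // S.card = k ∧ ¬ IsZeroForcing G ↑S}

/-- A fort: every vertex outside `F` has `0` or at least `2` neighbors in `F`. -/
def IsFort {V : Type*} (G : SimpleGraph V) (F : Set V) : Prop :=
  ∀ v ∉ F, (∀ w ∈ F, ¬ G.Adj v w) ∨
    ∃ w₁ ∈ F, ∃ w₂ ∈ F, w₁ ≠ w₂ ∧ G.Adj v w₁ ∧ G.Adj v w₂

/-- True twins: adjacent with the same neighbors outside the pair. -/
def TrueTwins {V : Type*} (G : SimpleGraph V) (u v : V) : Prop :=
  G.Adj u v ∧ ∀ w, w ≠ u → w ≠ v → (G.Adj u w ↔ G.Adj v w)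

/-- False twins: distinct, nonadjacent, with the same open neighborhoods. -/
def FalseTwins {V : Type*} (G : SimpleGraph V) (u v : V) : Prop :=
  u ≠ v ∧ ¬ G.Adj u v ∧ ∀ w, G.Adj u w ↔ G.Adj v w

/-- A twin pair: true twins or false twins. -/
def TwinPair {V : Type*} (G : SimpleGraph V) (u v : V) : Prop :=
  TrueTwins G u v ∨ FalseTwins G u v

/-- `G` is path-extremal: the path on the same number of vertices has
coefficientwise at least as many zero forcing sets of every size. -/
noncomputable def PathExtremal {V : Type*} (G : SimpleGraph V) [Fintype V] : Prop :=
  ∀ k : ℕ, zfCount G k ≤ zfCount (SimpleGraph.pathGraph (Fintype.card V)) k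

section AuxLemmas
variable {V : Type*} {G : SimpleGraph V}

lemma zf_mono {S S' : Set V} (h : S ⊆ S') {w : V}
    (hw : ZFClosure G S w) : ZFClosure G S' w := by
  induction hw with
  | init h' => exact .init (h h')
  | force _ hadj _ ih ihall => exact .force ih hadj ihall

lemma notMem_fort_of_closure {S F : Set V} (hF : IsFort G F)
    (hdisj : ∀ a ∈ F, a ∉ S) {w : V} (hw : ZFClosure G S w) : w ∉ F := by
  induction hw with
  | init h' => exact fun hw => hdisj _ hw h'
  | @force u w _ hadj hall ihu ihall =>
    intro hwF
    rcases hF u ihu with h | ⟨w₁, hw₁, w₂, hw₂, hne, ha₁, ha₂⟩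
    · exact h w hwF hadj
    · rcases ne_or_eq w₁ w with h1 | rfl
      · exact ihall w₁ ha₁ h1 hw₁
      · exact ihall w₂ ha₂ (fun e => hne e.symm) hw₂

lemma not_forcing_of_fort {S F : Set V} (hF : IsFort G F) (hne : F.Nonempty)
    (hdisj : ∀ a ∈ F, a ∉ S) : ¬ IsZeroForcing G S := by
  obtain ⟨a, ha⟩ := hne
  exact fun h => notMem_fort_of_closure hF hdisj (h a) ha

lemma exists_fort_of_not_forcing {S : Set V} (h : ¬ IsZeroForcing G S) :
    ∃ F, IsFort G F ∧ F.Nonempty ∧ ∀ a ∈ F, a ∉ S := by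
  classical
  refine ⟨{w | ¬ ZFClosure G S w}, ?_, ?_, fun a ha haS => ha (.init haS)⟩
  · intro u hu
    have hu' : ZFClosure G S u := not_not.mp hu
    by_cases hL : ∀ w ∈ {w | ¬ ZFClosure G S w}, ¬ G.Adj u w
    · exact Or.inl hL
    · push_neg at hL
      obtain ⟨w, hwF, hwadj⟩ := hL
      by_cases hR : ∃ w₁ ∈ {w | ¬ ZFClosure G S w}, ∃ w₂ ∈ {w | ¬ ZFClosure G S w},
          w₁ ≠ w₂ ∧ G.Adj u w₁ ∧ G.Adj u w₂
      · exact Or.inr hR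
      · exfalso
        have hall : ∀ y, G.Adj u y → y ≠ w → ZFClosure G S y := by
          intro y hy hne
          by_contra hyc
          exact hR ⟨w, hwF, y, hyc, fun e => hne e.symm, hwadj, hy⟩
        exact hwF (.force hu' hwadj hall)
  · have : ¬ ∀ w, ZFClosure G S w := h
    push_neg at this
    exact this

lemma zf_delete_aux {x v : V} (hadj : G.Adj x v)
    (huniq : ∀ w, G.Adj x w → w = v) {s : Set V} (hs : ∀ w, w ∈ s ↔ w ≠ x)
    {S : Set V} (hxv : x ∈ S → v ∈ S) {w : V} (hw : ZFClosure G S w) :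
    (w = x → ZFClosure (G.induce s) {a : s | (a : V) ∈ S} ⟨v, (hs v).2 hadj.ne'⟩) ∧
      (∀ h : w ∈ s, ZFClosure (G.induce s) {a : s | (a : V) ∈ S} ⟨w, h⟩) := by
  induction hw with
  | @init w h' =>
    constructor
    · rintro rfl
      exact .init (hxv h')
    · intro h
      exact .init h'
  | @force u w hu hadj2 hall ihu ihall =>
    constructor
    · rintro rfl
      have huv : u = v := huniq u hadj2.symm
      subst huv
      exact ihu.2 ((hs u).2 hadj.ne')
    · intro h
      have hwx : w ≠ x := (hs w).1 h
      by_cases hux : u = x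
      · subst hux
        have : w = v := huniq w hadj2
        subst this
        exact ihu.1 rfl
      · have hus : u ∈ s := (hs u).2 hux
        refine .force (ihu.2 hus) (by exact hadj2 : (G.induce s).Adj ⟨u, hus⟩ ⟨w, h⟩) ?_
        rintro ⟨y, hy⟩ hay hne
        have h1 : G.Adj u y := hay
        have h2 : y ≠ w := fun e => hne (Subtype.ext e)
        exact (ihall y h1 h2).2 hy

lemma forcing_delete {x v : V} (hadj : G.Adj x v)
    (huniq : ∀ w, G.Adj x w → w = v) {s : Set V} (hs : ∀ w, w ∈ s ↔ w ≠ x)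
    {S : Set V} (hxv : x ∈ S → v ∈ S) (h : IsZeroForcing G S) :
    IsZeroForcing (G.induce s) {a : s | (a : V) ∈ S} :=
  fun w => (zf_delete_aux hadj huniq hs hxv (h ↑w)).2 w.2

lemma nonforcing_insert_lift {x v : V} (hadj : G.Adj x v)
    (huniq : ∀ w, G.Adj x w → w = v) {s : Set V}
    (hs : ∀ w, w ∈ s ↔ (w ≠ x ∧ w ≠ v)) {T : Set s}
    (hT : ¬ IsZeroForcing (G.induce s) T) :
    ¬ IsZeroForcing G (insert v (Subtype.val '' T)) := by
  classical
  obtain ⟨F, hF, hFne, hFd⟩ := exists_fort_of_not_forcing hT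
  have hvalne : ∀ f : s, (f : V) ≠ x ∧ (f : V) ≠ v := fun f => (hs _).1 f.2
  have hdisjF : ∀ a ∈ Subtype.val '' F, a ∉ insert v (Subtype.val '' T) := by
    rintro a ⟨f, hf, rfl⟩ hmem
    rcases hmem with h | ⟨t, ht, hte⟩
    · exact (hvalne f).2 h
    · exact hFd f hf (by rwa [Subtype.val_injective hte] at ht)
  have hgen : ∀ u, u ≠ x → u ≠ v → u ∉ Subtype.val '' F →
      (∀ w ∈ Subtype.val '' F, ¬ G.Adj u w) ∨
      ∃ w₁ ∈ Subtype.val '' F, ∃ w₂ ∈ Subtype.val '' F, w₁ ≠ w₂ ∧ G.Adj u w₁ ∧ G.Adj u w₂ := by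
    intro u hux huv huF
    have hus : u ∈ s := (hs u).2 ⟨hux, huv⟩
    have : (⟨u, hus⟩ : s) ∉ F := fun h => huF ⟨_, h, rfl⟩
    rcases hF _ this with hL | ⟨f₁, h1, f₂, h2, hne, a1, a2⟩
    · refine Or.inl ?_
      rintro w ⟨f, hf, rfl⟩
      exact hL f hf
    · exact Or.inr ⟨f₁, ⟨f₁, h1, rfl⟩, f₂, ⟨f₂, h2, rfl⟩,
        fun e => hne (Subtype.ext e), a1, a2⟩
  by_cases hc : ∃ f ∈ F, G.Adj v (f : V)
  · obtain ⟨f₀, hf₀, hf₀adj⟩ := hc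
    refine not_forcing_of_fort (F := insert x (Subtype.val '' F)) ?_ ⟨x, Set.mem_insert _ _⟩ ?_
    · intro u hu
      by_cases huv : u = v
      · subst huv
        exact Or.inr ⟨x, Set.mem_insert _ _, f₀, Set.mem_insert_of_mem _ ⟨f₀, hf₀, rfl⟩,
          fun e => (hvalne f₀).1 e.symm, hadj.symm, hf₀adj⟩
      · have hux : u ≠ x := fun e => hu (e ▸ Set.mem_insert _ _)
        have huF : u ∉ Subtype.val '' F := fun h => hu (Set.mem_insert_of_mem _ h)
        rcases hgen u hux huv huF with hL | ⟨w₁, h1, w₂, h2, hne, a1, a2⟩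
        · refine Or.inl ?_
          rintro w hw
          rcases hw with rfl | hw
          · exact fun ha => huv (huniq u ha.symm)
          · exact hL w hw
        · exact Or.inr ⟨w₁, Set.mem_insert_of_mem _ h1, w₂, Set.mem_insert_of_mem _ h2,
            hne, a1, a2⟩
    · intro a ha
      rcases ha with rfl | ha
      · rintro (h | ⟨t, _, hte⟩)
        · exact hadj.ne h
        · exact (hvalne t).1 hte
      · exact hdisjF a ha
  · refine not_forcing_of_fort (F := Subtype.val '' F) ?_ (hFne.image _) hdisjF
    intro u hu
    by_cases hux : u = x
    · subst hux
      refine Or.inl ?_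
      rintro w ⟨f, hf, rfl⟩ ha
      exact (hvalne f).2 (huniq _ ha)
    · by_cases huv : u = v
      · subst huv
        refine Or.inl ?_
        rintro w ⟨f, hf, rfl⟩ ha
        exact hc ⟨f, hf, ha⟩
      · exact hgen u hux huv hu

end AuxLemmas

/-- Leaf recurrence: if `x` is a leaf of `G` with unique neighbor `v`, then for
every `k ≥ 1`, `z'(G;k) ≥ z'(G-x;k) + z'(G-{x,v};k-1)`. -/
theorem stmt_3 {V : Type*} [Fintype V] [DecidableEq V] (G : SimpleGraph V) (x v : V)
    (hadj : G.Adj x v) (huniq : ∀ w, G.Adj x w → w = v) (k : ℕ) (hk : 1 ≤ k) :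
    nfCount (G.induce ((Finset.univ.erase x : Finset V) : Set V)) k +
      nfCount (G.induce (((Finset.univ.erase x).erase v : Finset V) : Set V)) (k - 1) ≤
      nfCount G k := by
  classical
  set s1 : Set V := ((Finset.univ.erase x : Finset V) : Set V) with hs1def
  set s2 : Set V := (((Finset.univ.erase x).erase v : Finset V) : Set V) with hs2def
  have hs1 : ∀ w, w ∈ s1 ↔ w ≠ x := by
    intro w; simp [hs1def]
  have hs2 : ∀ w, w ∈ s2 ↔ (w ≠ x ∧ w ≠ v) := by
    intro w
    simp only [hs2def, Finset.coe_erase, Finset.coe_univ, Set.mem_diff, Set.mem_univ,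
      Set.mem_singleton_iff, true_and, Set.mem_setOf_eq, Finset.mem_coe, Finset.mem_erase,
      Finset.mem_univ, and_true]
  set emb1 : s1 ↪ V := Function.Embedding.subtype _ with hemb1
  set emb2 : s2 ↪ V := Function.Embedding.subtype _ with hemb2
  -- elements of mapped finsets avoid x (and v for s2)
  have hmem1 : ∀ (S : Finset s1) (a : V), a ∈ S.map emb1 → a ≠ x := by
    intro S a ha
    obtain ⟨b, _, rfl⟩ := Finset.mem_map.mp ha
    exact (hs1 _).1 b.2
  have hmem2 : ∀ (T : Finset s2) (a : V), a ∈ T.map emb2 → a ≠ x ∧ a ≠ v := by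
    intro T a ha
    obtain ⟨b, _, rfl⟩ := Finset.mem_map.mp ha
    exact (hs2 _).1 b.2
  -- Fam types
  set Fam1 := {S : Finset s1 // S.card = k ∧ ¬ IsZeroForcing (G.induce s1) ↑S} with hF1
  set Fam2 := {S : Finset s2 // S.card = k - 1 ∧ ¬ IsZeroForcing (G.induce s2) ↑S} with hF2
  set FamG := {S : Finset V // S.card = k ∧ ¬ IsZeroForcing G ↑S} with hFG
  -- map 1 lands
  have map1_lands : ∀ (S : Finset s1), ¬ IsZeroForcing (G.induce s1) ↑S →
      ¬ IsZeroForcing G ↑(S.map emb1) := by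
    intro S hS h
    apply hS
    have hxv : x ∈ (↑(S.map emb1) : Set V) → v ∈ (↑(S.map emb1) : Set V) :=
      fun hx => absurd rfl (hmem1 S x hx)
    have := forcing_delete hadj huniq hs1 hxv h
    have heq : {a : s1 | (a : V) ∈ (↑(S.map emb1) : Set V)} = (↑S : Set s1) := by
      ext a
      simp only [Set.mem_setOf_eq, Finset.mem_coe, Finset.mem_map, hemb1,
        Function.Embedding.coe_subtype]
      constructor
      · rintro ⟨b, hb, he⟩
        rwa [Subtype.val_injective he] at hb
      · intro hb
        exact ⟨a, hb, rfl⟩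
    rwa [heq] at this
  -- map 2 (v-branch) lands
  have map2v_lands : ∀ (T : Finset s2), ¬ IsZeroForcing (G.induce s2) ↑T →
      ¬ IsZeroForcing G ↑(insert v (T.map emb2)) := by
    intro T hT
    have : (↑(insert v (T.map emb2)) : Set V) = insert v (Subtype.val '' (↑T : Set s2)) := by
      simp [hemb2, Finset.coe_map]
    rw [this]
    exact nonforcing_insert_lift hadj huniq hs2 hT
  -- if insert x (T.map emb2) forces G, then (insert v ...) forces G - x
  have map2x_forces : ∀ (T : Finset s2), IsZeroForcing G ↑(insert x (T.map emb2)) →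
      IsZeroForcing (G.induce s1) {a : s1 | (a : V) ∈ (↑(insert v (T.map emb2)) : Set V)} := by
    intro T h
    have hsub : (↑(insert x (T.map emb2)) : Set V) ⊆ insert x (↑(insert v (T.map emb2)) : Set V) := by
      intro a ha
      simp only [Finset.coe_insert, Set.mem_insert_iff, Finset.mem_coe] at ha ⊢
      tauto
    have h2 : IsZeroForcing G (insert x (↑(insert v (T.map emb2)) : Set V)) :=
      fun w => zf_mono hsub (h w)
    have hxv : x ∈ insert x (↑(insert v (T.map emb2)) : Set V) →
        v ∈ insert x (↑(insert v (T.map emb2)) : Set V) := by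
      intro _
      exact Set.mem_insert_of_mem _ (by simp)
    have := forcing_delete hadj huniq hs1 hxv h2
    have heq : {a : s1 | (a : V) ∈ insert x (↑(insert v (T.map emb2)) : Set V)} =
        {a : s1 | (a : V) ∈ (↑(insert v (T.map emb2)) : Set V)} := by
      ext a
      have hax : (a : V) ≠ x := (hs1 _).1 a.2
      simp only [Set.mem_setOf_eq, Set.mem_insert_iff]
      exact ⟨fun h => h.resolve_left hax, Or.inr⟩
    rwa [heq] at this
  -- the injection
  have hxver : x ∉ Finset.univ.erase x := fun h => (Finset.mem_erase.mp h).1 rfl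
  set g1 : Fam1 → FamG := fun S =>
    ⟨S.1.map emb1, by rw [Finset.card_map]; exact S.2.1, map1_lands S.1 S.2.2⟩ with hg1
  set g2 : Fam2 → FamG := fun T =>
    if h : IsZeroForcing G ↑(insert x (T.1.map emb2)) then
      ⟨insert v (T.1.map emb2), by
        rw [Finset.card_insert_of_notMem (fun hc => (hmem2 T.1 v hc).2 rfl), Finset.card_map,
          T.2.1]
        omega, map2v_lands T.1 T.2.2⟩
    else
      ⟨insert x (T.1.map emb2), by
        rw [Finset.card_insert_of_notMem (fun hc => (hmem2 T.1 x hc).1 rfl), Finset.card_map,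
          T.2.1]
        omega, h⟩ with hg2
  -- facts about memberships in images
  have hx_not_g1 : ∀ S : Fam1, x ∉ (g1 S).1 := fun S hc => hmem1 S.1 x hc rfl
  have collision : ∀ (S : Fam1) (T : Fam2), g1 S ≠ g2 T := by
    intro S T he
    simp only [hg2] at he
    split_ifs at he with hforce
    · -- g1 S = insert v (T.map emb2); derive contradiction with ¬forcing H1 S
      have himg : S.1.map emb1 = insert v (T.1.map emb2) := congrArg Subtype.val he
      apply S.2.2
      have := map2x_forces T.1 hforce
      have heq : {a : s1 | (a : V) ∈ (↑(insert v (T.1.map emb2)) : Set V)} = (↑S.1 : Set s1) := by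
        ext a
        simp only [Set.mem_setOf_eq, ← himg, Finset.mem_coe]
        constructor
        · intro h
          obtain ⟨b, hb, hbe⟩ := Finset.mem_map.mp h
          have : b = a := Subtype.val_injective hbe
          rwa [this] at hb
        · intro hb
          exact Finset.mem_map_of_mem _ hb
      rwa [heq] at this
    · -- g1 S = insert x ... : but x not in g1 S
      have : x ∈ (g1 S).1 := by rw [he]; exact Finset.mem_insert_self _ _
      exact hx_not_g1 S this
  have hg2inj : Function.Injective g2 := by
    intro T1 T2 he
    have himg : (g2 T1).1 = (g2 T2).1 := congrArg Subtype.val he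
    simp only [hg2] at himg
    have hxmem : ∀ (T : Finset s2), x ∉ T.map emb2 := fun T hc => (hmem2 T x hc).1 rfl
    have hvmem : ∀ (T : Finset s2), v ∉ T.map emb2 := fun T hc => (hmem2 T v hc).2 rfl
    have key : T1.1.map emb2 = T2.1.map emb2 := by
      split_ifs at himg with h1 h2 h2
      · simp only at himg
        have := congrArg (Finset.erase · v) himg
        simpa [Finset.erase_insert (hvmem T1.1), Finset.erase_insert (hvmem T2.1)] using this
      · simp only at himg
        exfalso
        have hxm : x ∈ insert v (T1.1.map emb2) := by
          rw [himg]; exact Finset.mem_insert_self _ _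
        rcases Finset.mem_insert.mp hxm with h | h
        · exact hadj.ne h
        · exact hxmem T1.1 h
      · simp only at himg
        exfalso
        have hxm : x ∈ insert v (T2.1.map emb2) := by
          rw [← himg]; exact Finset.mem_insert_self _ _
        rcases Finset.mem_insert.mp hxm with h | h
        · exact hadj.ne h
        · exact hxmem T2.1 h
      · simp only at himg
        have := congrArg (Finset.erase · x) himg
        simpa [Finset.erase_insert (hxmem T1.1), Finset.erase_insert (hxmem T2.1)] using this
    have : T1.1 = T2.1 := Finset.map_injective emb2 key
    exact Subtype.ext this
  have hg1inj : Function.Injective g1 := by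
    intro S1 S2 he
    have himg : S1.1.map emb1 = S2.1.map emb1 := congrArg Subtype.val he
    exact Subtype.ext (Finset.map_injective emb1 himg)
  set f : Fam1 ⊕ Fam2 → FamG := Sum.elim g1 g2 with hf
  have hfinj : Function.Injective f := by
    rintro (a | a) (b | b) he
    · rw [hg1inj he]
    · exact absurd he (collision a b)
    · exact absurd he.symm (collision b a)
    · rw [hg2inj he]
  have hcard := Nat.card_le_card_of_injective f hfinj
  rw [Nat.card_sum] at hcard
  unfold nfCount
  exact hcard
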